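/- Let n ≥ 2 and let ℓ : ℝ → [0,∞) be measurable such that F_ℓ is a set of finite perimeter and finite volume in ℝⁿ. Fix z̄ ∈ ℝ and w ∈ ℝ^{n-1} with |w| < r_ℓ^∧(z̄). Then (z̄,w) is a point of density 1 of F_ℓ, i.e. lim_{ρ→0⁺} ℋ^n(F_ℓ ∩ B_ρ((z̄,w)))/(ω_n ρⁿ) = 1. -/

import Mathlib

open MeasureTheory Metric Set Filter
open scoped ENNReal NNReal Topology RealInnerProductSpace symmDiff

noncomputable section

namespace Schwarz

/-- The point `(z, w) ∈ ℝ × ℝ^m ≅ ℝ^(m+1)`. -/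
def mk' {m : ℕ} (z : ℝ) (w : EuclideanSpace ℝ (Fin m)) : EuclideanSpace ℝ (Fin (m + 1)) :=
  (WithLp.equiv 2 (Fin (m + 1) → ℝ)).symm (Fin.cons z ((WithLp.equiv 2 (Fin m → ℝ)) w))

/-- The `w`-component of a point of `ℝ^(m+1) ≅ ℝ × ℝ^m`. -/
def tailv {m : ℕ} (x : EuclideanSpace ℝ (Fin (m + 1))) : EuclideanSpace ℝ (Fin m) :=
  (WithLp.equiv 2 (Fin m → ℝ)).symm (fun i => x i.succ)

/-- The slice of a subset of `ℝ^(m+1)` at height `z`. -/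
def slice {m : ℕ} (A : Set (EuclideanSpace ℝ (Fin (m + 1)))) (z : ℝ) :
    Set (EuclideanSpace ℝ (Fin m)) := {w | mk' z w ∈ A}

/-- `ω_d`, the Lebesgue measure of the unit ball of `ℝ^d`. -/
def ballVol (d : ℕ) : ℝ≥0∞ := volume (ball (0 : EuclideanSpace ℝ (Fin d)) 1)

/-- `A ⊆ ℝ^(m+1)` is `ℓ`-distributed: a.e. slice has measure `ℓ z`. -/
def IsDistributed (m : ℕ) (ℓ : ℝ → ℝ) (A : Set (EuclideanSpace ℝ (Fin (m + 1)))) : Prop :=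
  ∀ᵐ z ∂(volume : Measure ℝ), volume (slice A z) = ENNReal.ofReal (ℓ z)

/-- The radius `r_ℓ(z) = (ℓ z / ω_m)^(1/m)`. -/
def rad (m : ℕ) (ℓ : ℝ → ℝ) (z : ℝ) : ℝ := (ℓ z / (ballVol m).toReal) ^ ((1 : ℝ) / m)

/-- The Schwarz symmetric set `F_ℓ`. -/
def F (m : ℕ) (ℓ : ℝ → ℝ) : Set (EuclideanSpace ℝ (Fin (m + 1))) :=
  {x | ‖tailv x‖ < rad m ℓ (x 0)}

/-- The density of `A` at `x` equals `s` (balls of volume `ω_d ρ^d`). -/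
def DensAt {d : ℕ} (A : Set (EuclideanSpace ℝ (Fin d))) (x : EuclideanSpace ℝ (Fin d))
    (s : ℝ≥0∞) : Prop :=
  Tendsto (fun ρ : ℝ => volume (A ∩ ball x ρ) / (ballVol d * ENNReal.ofReal (ρ ^ d)))
    (𝓝[>] 0) (𝓝 s)

/-- The essential (measure-theoretic) boundary: where the density is neither 0 nor 1.
By Federer's theorem it agrees with the reduced boundary up to `ℋ^(d-1)`-null sets. -/
def essBoundary {d : ℕ} (A : Set (EuclideanSpace ℝ (Fin d))) :
    Set (EuclideanSpace ℝ (Fin d)) :=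
  {x | ¬ DensAt A x 0 ∧ ¬ DensAt A x 1}

/-- Relative perimeter `P(A; G) = ℋ^(d-1)(G ∩ ∂*A)`. -/
def perim {d : ℕ} (A G : Set (EuclideanSpace ℝ (Fin d))) : ℝ≥0∞ :=
  μH[(d : ℝ) - 1] (G ∩ essBoundary A)

/-- A set of finite perimeter (via Federer's criterion). -/
def HasFinPerim {d : ℕ} (A : Set (EuclideanSpace ℝ (Fin d))) : Prop :=
  MeasurableSet A ∧ perim A univ < ⊤

/-- Translation of a subset of `ℝ^(m+1)` by the horizontal vector `(0, τ)`. -/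
def vtrans {m : ℕ} (τ : EuclideanSpace ℝ (Fin m)) (A : Set (EuclideanSpace ℝ (Fin (m + 1)))) :
    Set (EuclideanSpace ℝ (Fin (m + 1))) := (fun x => x + mk' 0 τ) '' A

/-- One-dimensional density of `A ⊆ ℝ` at `x` equals `s`. -/
def DensAtR (A : Set ℝ) (x : ℝ) (s : ℝ≥0∞) : Prop :=
  Tendsto (fun ρ : ℝ => volume (A ∩ ball x ρ) / ENNReal.ofReal (2 * ρ)) (𝓝[>] 0) (𝓝 s)

/-- Approximate lower limit `g^∧(x)`. -/
def approxLower (g : ℝ → ℝ) (x : ℝ) : EReal :=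
  sSup ((fun s : ℝ => (s : EReal)) '' {s : ℝ | DensAtR {y | g y < s} x 0})

/-- Approximate upper limit `g^∨(x)`. -/
def approxUpper (g : ℝ → ℝ) (x : ℝ) : EReal :=
  sInf ((fun s : ℝ => (s : EReal)) '' {s : ℝ | DensAtR {y | s < g y} x 0})

/-- Divergence of a vector field on `ℝ^d`. -/
def divg {d : ℕ} (T : EuclideanSpace ℝ (Fin d) → EuclideanSpace ℝ (Fin d))
    (x : EuclideanSpace ℝ (Fin d)) : ℝ :=
  ∑ i, fderiv ℝ T x (EuclideanSpace.single i 1) i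

/-- `ν` is a measure-theoretic outer unit normal of `A`: the generalised Gauss–Green
formula holds on the (essential = reduced, up to `ℋ^(d-1)`-null sets) boundary. -/
def IsGGNormal {d : ℕ} (A : Set (EuclideanSpace ℝ (Fin d)))
    (ν : EuclideanSpace ℝ (Fin d) → EuclideanSpace ℝ (Fin d)) : Prop :=
  (∀ x ∈ essBoundary A, ‖ν x‖ = 1) ∧
  ∀ T : EuclideanSpace ℝ (Fin d) → EuclideanSpace ℝ (Fin d),
    ContDiff ℝ 1 T → HasCompactSupport T →
      ∫ x in A, divg T x = ∫ x in essBoundary A, ⟪T x, ν x⟫ ∂(μH[(d : ℝ) - 1])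

/-- `g ∈ W^{1,1}(Ω)`: `g` is integrable on `Ω` with integrable distributional derivative. -/
def MemW11 (g : ℝ → ℝ) (Ω : Set ℝ) : Prop :=
  IntegrableOn g Ω ∧ ∃ g' : ℝ → ℝ, IntegrableOn g' Ω ∧
    ∀ φ : ℝ → ℝ, ContDiff ℝ 1 φ → HasCompactSupport φ → tsupport φ ⊆ Ω →
      ∫ z in Ω, g z * deriv φ z = - ∫ z in Ω, g' z * φ z

/-- Rigidity for the perimeter inequality under Schwarz symmetrisation: every equality
case is a horizontal translate of `F_ℓ`. -/
def Rigidity (m : ℕ) (ℓ : ℝ → ℝ) : Prop :=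
  ∀ A : Set (EuclideanSpace ℝ (Fin (m + 1))), MeasurableSet A → IsDistributed m ℓ A →
    perim A univ = perim (F m ℓ) univ →
    ∃ τ : EuclideanSpace ℝ (Fin m), volume (A ∆ vtrans τ (F m ℓ)) = 0

/-- A decomposition `Dℓ = g dx + ε dσ` of the distributional derivative of `ℓ`:
`g = ∇ℓ` is the absolutely continuous density, `σ = |D^s ℓ|` and `ε` the sign of the
singular part. -/
def IsDerivDecomp (ℓ g ε : ℝ → ℝ) (σ : Measure ℝ) : Prop :=
  Integrable g ∧ σ ⟂ₘ (volume : Measure ℝ) ∧ IsFiniteMeasure σ ∧ (∀ᵐ x ∂σ, |ε x| = 1) ∧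
    ∀ φ : ℝ → ℝ, ContDiff ℝ 1 φ → HasCompactSupport φ →
      ∫ x, ℓ x * deriv φ x = -(∫ x, φ x * g x) - ∫ x, φ x * ε x ∂σ

/-- Bounded variation on `ℝ` via the variational definition. -/
def HasBddVariation (g : ℝ → ℝ) : Prop :=
  ∃ C : ℝ, ∀ T : ℝ → ℝ, ContDiff ℝ 1 T → HasCompactSupport T → (∀ x, |T x| ≤ 1) →
    ∫ x, g x * deriv T x ≤ C


/-! auxiliary lemmas -/

section Aux
variable {m : ℕ}

lemma mk'_zero (z : ℝ) (w : EuclideanSpace ℝ (Fin m)) : mk' z w 0 = z := rfl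

lemma mk'_succ (z : ℝ) (w : EuclideanSpace ℝ (Fin m)) (i : Fin m) :
    mk' z w i.succ = w i := by simp [mk']

lemma tailv_apply (x : EuclideanSpace ℝ (Fin (m+1))) (i : Fin m) :
    tailv x i = x i.succ := rfl

lemma tailv_mk' (z : ℝ) (w : EuclideanSpace ℝ (Fin m)) : tailv (mk' z w) = w := by
  ext i; rw [tailv_apply, mk'_succ]

lemma tailv_sub (a b : EuclideanSpace ℝ (Fin (m+1))) :
    tailv (a - b) = tailv a - tailv b := by
  ext i
  simp [tailv_apply]

lemma abs_zero_le (v : EuclideanSpace ℝ (Fin (m+1))) : |v 0| ≤ ‖v‖ := by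
  rw [EuclideanSpace.norm_eq, ← Real.sqrt_sq_eq_abs]
  apply Real.sqrt_le_sqrt
  rw [Fin.sum_univ_succ]
  simp only [Real.norm_eq_abs, sq_abs]
  have := Finset.sum_nonneg (fun i (_ : i ∈ Finset.univ) => sq_nonneg (v (Fin.succ i)))
  linarith

lemma norm_tailv_le (v : EuclideanSpace ℝ (Fin (m+1))) : ‖tailv v‖ ≤ ‖v‖ := by
  rw [EuclideanSpace.norm_eq, EuclideanSpace.norm_eq]
  apply Real.sqrt_le_sqrt
  rw [Fin.sum_univ_succ]
  simp only [tailv_apply]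
  exact le_add_of_nonneg_left (sq_nonneg _)

lemma measurePreserving_proj (m : ℕ) :
    MeasurePreserving (fun y : EuclideanSpace ℝ (Fin (m+1)) => (y 0, tailv y))
      volume (volume : Measure (ℝ × EuclideanSpace ℝ (Fin m))) := by
  have h1 := EuclideanSpace.volume_preserving_symm_measurableEquiv_toLp (Fin (m+1))
  have h2 := volume_preserving_piFinSuccAbove (fun _ : Fin (m+1) => ℝ) 0
  have h3 := (EuclideanSpace.volume_preserving_symm_measurableEquiv_toLp (Fin m)).symm
  have h4 := (MeasurePreserving.id (volume : Measure ℝ)).prod h3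
  have h5 := (h4.comp h2).comp h1
  convert h5 using 1
  all_goals rfl

end Aux


/-- points with `|w| < r_ℓ^∧(zb)` have density 1 for `F_ℓ`. -/
theorem densAt_one (m : ℕ) (hm : 1 ≤ m)
    (ℓ : ℝ → ℝ) (hmeas : Measurable ℓ) (hpos : ∀ z, 0 ≤ ℓ z)
    (hper : HasFinPerim (F m ℓ)) (hvol : volume (F m ℓ) < ⊤)
    (zb : ℝ) (w : EuclideanSpace ℝ (Fin m))
    (hw : ((‖w‖ : ℝ) : EReal) < approxLower (rad m ℓ) zb) :
    DensAt (F m ℓ) (mk' zb w) 1 := by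
  classical
  have hF : MeasurableSet (F m ℓ) := hper.1
  -- Step A: extract a level s with `‖w‖ < s` whose sublevel set has density 0 at zb
  rw [approxLower, lt_sSup_iff] at hw
  obtain ⟨t, ht, hwt⟩ := hw
  obtain ⟨s, hsZ, rfl⟩ := ht
  rw [EReal.coe_lt_coe_iff] at hwt
  set Z : Set ℝ := {y | rad m ℓ y < s} with hZdef
  have hZmeas : MeasurableSet Z := by
    have hrad : Measurable (rad m ℓ) := by
      have hcont : Continuous (fun u : ℝ => u ^ ((1:ℝ)/m)) :=
        Real.continuous_rpow_const (by positivity)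
      exact hcont.measurable.comp (hmeas.div_const _)
    exact measurableSet_lt hrad measurable_const
  set x : EuclideanSpace ℝ (Fin (m+1)) := mk' zb w with hxdef
  have hδ : 0 < s - ‖w‖ := sub_pos.mpr hwt
  -- constants
  have hB0 : ballVol (m+1) ≠ 0 := (measure_ball_pos _ _ one_pos).ne'
  have hBtop : ballVol (m+1) ≠ ⊤ := measure_ball_lt_top.ne
  have hbtop : ballVol m ≠ ⊤ := measure_ball_lt_top.ne
  set c : ℝ := (ballVol (m+1)).toReal with hcdef
  set b : ℝ := (ballVol m).toReal with hbdef
  have hc : 0 < c := ENNReal.toReal_pos hB0 hBtop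
  have hb : 0 ≤ b := ENNReal.toReal_nonneg
  -- measure-preserving projection
  have hfmp := measurePreserving_proj m
  -- Step D: inclusion
  have hsub : ∀ ρ : ℝ, 0 < ρ → ρ ≤ s - ‖w‖ →
      ball x ρ \ F m ℓ ⊆
        (fun y : EuclideanSpace ℝ (Fin (m+1)) => (y 0, tailv y)) ⁻¹'
          ((Z ∩ ball zb ρ) ×ˢ ball w ρ) := by
    intro ρ hρ hρδ y hy
    obtain ⟨hyb, hynF⟩ := hy
    have hdist : ‖y - x‖ < ρ := by
      rw [← dist_eq_norm]; exact mem_ball.mp hyb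
    have hx0 : (y - x) 0 = y 0 - zb := by
      have h1 : (y - x) 0 = y 0 - x 0 := rfl
      rw [h1, hxdef, mk'_zero]
    have h0 : |y 0 - zb| < ρ := by
      have h := abs_zero_le (y - x)
      rw [hx0] at h
      linarith
    have htl : ‖tailv y - w‖ < ρ := by
      have h1 : tailv (y - x) = tailv y - w := by
        rw [tailv_sub, hxdef, tailv_mk']
      calc ‖tailv y - w‖ = ‖tailv (y - x)‖ := by rw [h1]
        _ ≤ ‖y - x‖ := norm_tailv_le _
        _ < ρ := hdist
    have hZy : y 0 ∈ Z := by
      by_contra hne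
      have hrs : s ≤ rad m ℓ (y 0) := le_of_not_gt hne
      apply hynF
      show ‖tailv y‖ < rad m ℓ (y 0)
      have h2 : ‖tailv y‖ ≤ ‖w‖ + ‖tailv y - w‖ := by
        calc ‖tailv y‖ = ‖w + (tailv y - w)‖ := by congr 1; abel
          _ ≤ ‖w‖ + ‖tailv y - w‖ := norm_add_le _ _
      linarith
    exact ⟨⟨hZy, by rw [mem_ball, Real.dist_eq]; exact h0⟩,
      mem_ball.mpr (by rwa [dist_eq_norm])⟩
  -- Step E: volume of the preimage
  have hprod : ∀ ρ : ℝ, 0 < ρ →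
      volume ((fun y : EuclideanSpace ℝ (Fin (m+1)) => (y 0, tailv y)) ⁻¹'
          ((Z ∩ ball zb ρ) ×ˢ ball w ρ)) =
        volume (Z ∩ ball zb ρ) * (ENNReal.ofReal (ρ ^ m) * ballVol m) := by
    intro ρ hρ
    rw [hfmp.measure_preimage
      (((hZmeas.inter measurableSet_ball).prod measurableSet_ball).nullMeasurableSet)]
    rw [Measure.volume_eq_prod, Measure.prod_prod]
    congr 1
    rw [Measure.addHaar_ball_of_pos _ _ hρ, finrank_euclideanSpace_fin]
    rfl
  -- ball volume in ℝ^(m+1)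
  have hball : ∀ ρ : ℝ, 0 < ρ →
      volume (ball x ρ) = ballVol (m+1) * ENNReal.ofReal (ρ ^ (m+1)) := by
    intro ρ hρ
    rw [Measure.addHaar_ball_of_pos _ _ hρ, finrank_euclideanSpace_fin, mul_comm]
    rfl
  -- finiteness facts
  have hZfin : ∀ ρ : ℝ, 0 < ρ → volume (Z ∩ ball zb ρ) ≠ ⊤ := by
    intro ρ hρ
    exact ((measure_mono (inter_subset_right)).trans_lt measure_ball_lt_top).ne
  -- Step F: real-valued density of Z
  have hZ' : Tendsto (fun ρ : ℝ => (volume (Z ∩ ball zb ρ)).toReal / (2 * ρ))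
      (nhdsWithin 0 (Ioi 0)) (nhds 0) := by
    have h1 := (ENNReal.tendsto_toReal (by norm_num : (0:ℝ≥0∞) ≠ ⊤)).comp hsZ
    rw [ENNReal.toReal_zero] at h1
    apply h1.congr'
    filter_upwards [self_mem_nhdsWithin] with ρ hρ
    have hρ0 : (0:ℝ) < ρ := hρ
    simp [Function.comp, ENNReal.toReal_div, ENNReal.toReal_ofReal hρ0.le, hZdef,
      ENNReal.toReal_ofReal (by linarith : (0:ℝ) ≤ 2 * ρ)]
  -- the error term tends to 0
  have hub : Tendsto (fun ρ : ℝ => (volume (Z ∩ ball zb ρ)).toReal / (2 * ρ) * (2 * b / c))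
      (nhdsWithin 0 (Ioi 0)) (nhds 0) := by
    simpa using hZ'.mul_const (2 * b / c)
  have hg0 : Tendsto (fun ρ : ℝ => (volume (ball x ρ \ F m ℓ)).toReal / (c * ρ ^ (m+1)))
      (nhdsWithin 0 (Ioi 0)) (nhds 0) := by
    refine squeeze_zero' ?_ ?_ hub
    · filter_upwards [self_mem_nhdsWithin] with ρ hρ
      have hρ0 : (0:ℝ) < ρ := hρ
      apply div_nonneg ENNReal.toReal_nonneg
      positivity
    · filter_upwards [Ioc_mem_nhdsGT_of_mem ⟨le_rfl, hδ⟩] with ρ hρ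
      obtain ⟨hρ0, hρδ⟩ := hρ
      have hkey : (volume (ball x ρ \ F m ℓ)).toReal ≤
          (volume (Z ∩ ball zb ρ)).toReal * (ρ ^ m * b) := by
        have h1 : volume (ball x ρ \ F m ℓ) ≤
            volume (Z ∩ ball zb ρ) * (ENNReal.ofReal (ρ ^ m) * ballVol m) := by
          rw [← hprod ρ hρ0]
          exact measure_mono (hsub ρ hρ0 hρδ)
        have h2 : volume (Z ∩ ball zb ρ) * (ENNReal.ofReal (ρ ^ m) * ballVol m) ≠ ⊤ :=
          ENNReal.mul_ne_top (hZfin ρ hρ0) (ENNReal.mul_ne_top ENNReal.ofReal_ne_top hbtop)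
        calc (volume (ball x ρ \ F m ℓ)).toReal
            ≤ (volume (Z ∩ ball zb ρ) * (ENNReal.ofReal (ρ ^ m) * ballVol m)).toReal :=
              ENNReal.toReal_mono h2 h1
          _ = (volume (Z ∩ ball zb ρ)).toReal * (ρ ^ m * b) := by
              rw [ENNReal.toReal_mul, ENNReal.toReal_mul,
                ENNReal.toReal_ofReal (by positivity : (0:ℝ) ≤ ρ ^ m)]
      have hden : 0 < c * ρ ^ (m+1) := by positivity
      calc (volume (ball x ρ \ F m ℓ)).toReal / (c * ρ ^ (m+1))
          ≤ (volume (Z ∩ ball zb ρ)).toReal * (ρ ^ m * b) / (c * ρ ^ (m+1)) :=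
            div_le_div_of_nonneg_right hkey hden.le
        _ = (volume (Z ∩ ball zb ρ)).toReal / (2 * ρ) * (2 * b / c) := by
            field_simp
            ring
  -- main real limit
  have hfin : ∀ ρ : ℝ, 0 < ρ → volume (F m ℓ ∩ ball x ρ) ≠ ⊤ := fun ρ hρ =>
    ((measure_mono (inter_subset_right)).trans_lt measure_ball_lt_top).ne
  have hnum : ∀ ρ : ℝ, 0 < ρ → (volume (F m ℓ ∩ ball x ρ)).toReal =
      c * ρ ^ (m+1) - (volume (ball x ρ \ F m ℓ)).toReal := by
    intro ρ hρ
    have hsum : volume (F m ℓ ∩ ball x ρ) + volume (ball x ρ \ F m ℓ) = volume (ball x ρ) := by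
      rw [inter_comm]; exact measure_inter_add_diff _ hF
    have hdtop : volume (ball x ρ \ F m ℓ) ≠ ⊤ :=
      ((measure_mono (diff_subset)).trans_lt measure_ball_lt_top).ne
    have h3 := congrArg ENNReal.toReal hsum
    rw [ENNReal.toReal_add (hfin ρ hρ) hdtop, hball ρ hρ, ENNReal.toReal_mul,
      ENNReal.toReal_ofReal (by positivity : (0:ℝ) ≤ ρ ^ (m+1))] at h3
    rw [← hcdef] at h3
    linarith
  have hfreal : Tendsto (fun ρ : ℝ => (volume (F m ℓ ∩ ball x ρ)).toReal / (c * ρ ^ (m+1)))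
      (nhdsWithin 0 (Ioi 0)) (nhds 1) := by
    have h1 : Tendsto (fun ρ : ℝ =>
        1 - (volume (ball x ρ \ F m ℓ)).toReal / (c * ρ ^ (m+1)))
        (nhdsWithin 0 (Ioi 0)) (nhds 1) := by
      have h2 := tendsto_const_nhds (x := (1:ℝ)) (f := nhdsWithin (0:ℝ) (Ioi 0))
      simpa using h2.sub hg0
    apply h1.congr'
    filter_upwards [self_mem_nhdsWithin] with ρ hρ
    have hρ0 : (0:ℝ) < ρ := hρ
    have hden : c * ρ ^ (m+1) ≠ 0 := by positivity
    rw [hnum ρ hρ0]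
    field_simp
  -- Step G: back to ENNReal
  show Tendsto (fun ρ : ℝ => volume (F m ℓ ∩ ball x ρ) /
      (ballVol (m+1) * ENNReal.ofReal (ρ ^ (m+1)))) (nhdsWithin 0 (Ioi 0)) (nhds 1)
  have h2 := ENNReal.tendsto_ofReal hfreal
  rw [ENNReal.ofReal_one] at h2
  apply h2.congr'
  filter_upwards [self_mem_nhdsWithin] with ρ hρ
  have hρ0 : (0:ℝ) < ρ := hρ
  have hD0 : ballVol (m+1) * ENNReal.ofReal (ρ ^ (m+1)) ≠ 0 := by
    refine mul_ne_zero hB0 ?_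
    simp only [ne_eq, ENNReal.ofReal_eq_zero, not_le]
    positivity
  have htop : volume (F m ℓ ∩ ball x ρ) / (ballVol (m+1) * ENNReal.ofReal (ρ ^ (m+1))) ≠ ⊤ :=
    (ENNReal.div_lt_top (hfin ρ hρ0) hD0).ne
  rw [← ENNReal.ofReal_toReal htop, ENNReal.toReal_div, ENNReal.toReal_mul,
    ENNReal.toReal_ofReal (by positivity : (0:ℝ) ≤ ρ ^ (m+1)), ← hcdef]


end Schwarz
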